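/- Let ℓ > 0 and α > 0. The eigenfunctions φ_n of the Gaussian kernel are orthonormal in L²(μ_α): for all integers n, m ≥ 0, ∫_ℝ φ_n(x)·φ_m(x) dμ_α(x) equals 1 if n = m and 0 otherwise. -/

import Mathlib

open Polynomial MeasureTheory Real Filter Set Topology

lemma deriv_hermite (n : ℕ) :
    derivative (hermite (n+1)) = C ((n : ℤ)+1) * hermite n := by
  induction n with
  | zero => simp [hermite_one, hermite_zero]
  | succ k ih =>
    rw [hermite_succ (k+1), derivative_sub, derivative_mul, derivative_X, one_mul, ih,
      derivative_C_mul, hermite_succ k]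
    have h : (C ((k:ℤ)+1+1) : ℤ[X]) = C ((k:ℤ)+1) + 1 := by simp [map_add]
    push_cast
    rw [h]
    ring

lemma tendsto_aeval_mul_exp (P : ℤ[X]) {b : ℝ} (hb : 0 < b) :
    Tendsto (fun x : ℝ => (aeval x P : ℝ) * Real.exp (-b * x^2)) (cocompact ℝ) (𝓝 0) := by
  have key : ∀ i : ℕ, Tendsto (fun x : ℝ => x^i * Real.exp (-b * x^2)) (cocompact ℝ) (𝓝 0) := by
    intro i
    rw [tendsto_zero_iff_norm_tendsto_zero]
    refine (tendsto_rpow_abs_mul_exp_neg_mul_sq_cocompact hb (i : ℝ)).congr fun x => ?_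
    rw [Real.rpow_natCast, Real.norm_eq_abs, abs_mul, abs_pow,
      abs_of_nonneg (Real.exp_pos _).le]
  have heq : (fun x : ℝ => (aeval x P : ℝ) * Real.exp (-b * x^2)) =
      fun x => ∑ i ∈ Finset.range (P.natDegree + 1),
        (P.coeff i : ℝ) * (x^i * Real.exp (-b * x^2)) := by
    funext x
    rw [Polynomial.aeval_def, Polynomial.eval₂_eq_sum_range, Finset.sum_mul]
    refine Finset.sum_congr rfl fun i _ => ?_
    simp [mul_assoc]
  rw [heq]
  simpa using tendsto_finset_sum (Finset.range (P.natDegree + 1))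
    (fun i _ => ((key i).const_mul ((P.coeff i : ℝ))))

lemma integrable_aeval_mul_exp (P : ℤ[X]) {b : ℝ} (hb : 0 < b) :
    Integrable (fun x : ℝ => (aeval x P : ℝ) * Real.exp (-b * x^2)) := by
  have cont : Continuous (fun x : ℝ => (aeval x P : ℝ) * Real.exp (-b * x^2)) := by
    have h : Continuous fun x : ℝ => (aeval x P : ℝ) := Polynomial.continuous_aeval P
    exact h.mul (Real.continuous_exp.comp (by fun_prop))
  have hb2 : 0 < b/2 := half_pos hb
  have hg : IntegrableAtFilter (fun x : ℝ => Real.exp (-(b/2) * x^2)) (cocompact ℝ) volume :=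
    (integrable_exp_neg_mul_sq hb2).integrableAtFilter _
  refine cont.locallyIntegrable.integrable_of_isBigO_cocompact
    (g := fun x : ℝ => Real.exp (-(b/2) * x^2)) ?_ hg
  have heq : (fun x : ℝ => (aeval x P : ℝ) * Real.exp (-b * x^2)) =
      fun x => ((aeval x P : ℝ) * Real.exp (-(b/2) * x^2)) * Real.exp (-(b/2) * x^2) := by
    funext x
    rw [mul_assoc, ← Real.exp_add]
    ring_nf
  rw [heq]
  have h1 : (fun x : ℝ => (aeval x P : ℝ) * Real.exp (-(b/2) * x^2))
      =o[cocompact ℝ] (fun _ : ℝ => (1 : ℝ)) :=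
    (Asymptotics.isLittleO_one_iff ℝ).mpr (tendsto_aeval_mul_exp P hb2)
  have h2 := (h1.mul_isBigO (Asymptotics.isBigO_refl
    (fun x : ℝ => Real.exp (-(b/2) * x^2)) (cocompact ℝ))).isBigO
  exact h2.trans (Asymptotics.isBigO_of_le _ (fun x => by simp [abs_of_nonneg (Real.exp_pos _).le]))

lemma integral_deriv_zero (f f' : ℝ → ℝ) (hderiv : ∀ x, HasDerivAt f (f' x) x)
    (hint : Integrable f') (htop : Tendsto f atTop (𝓝 0)) (hbot : Tendsto f atBot (𝓝 0)) :
    ∫ x : ℝ, f' x = 0 := by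
  have h1 : ∫ x in Iic (0:ℝ), f' x = f 0 - 0 :=
    integral_Iic_of_hasDerivAt_of_tendsto (hderiv 0).continuousAt.continuousWithinAt
      (fun x _ => hderiv x) hint.integrableOn hbot
  have h2 : ∫ x in Ioi (0:ℝ), f' x = 0 - f 0 :=
    integral_Ioi_of_hasDerivAt_of_tendsto (hderiv 0).continuousAt.continuousWithinAt
      (fun x _ => hderiv x) hint.integrableOn htop
  rw [← intervalIntegral.integral_Iic_add_Ioi hint.integrableOn hint.integrableOn, h1, h2]
  ring

lemma hasDerivAt_hermite_gauss (n : ℕ) (x : ℝ) :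
    HasDerivAt (fun y : ℝ => (aeval y (hermite n) : ℝ) * Real.exp (-(y^2/2)))
      (-((aeval x (hermite (n+1)) : ℝ) * Real.exp (-(x^2/2)))) x := by
  have h1 : HasDerivAt (fun y : ℝ => (aeval y (hermite n) : ℝ))
      (aeval x (derivative (hermite n))) x := Polynomial.hasDerivAt_aeval _ x
  have h2 : HasDerivAt (fun y : ℝ => Real.exp (-(y^2/2))) (-x * Real.exp (-(x^2/2))) x := by
    have h3 : HasDerivAt (fun y : ℝ => -(y^2/2)) (-x) x := by
      simpa [Pi.neg_def] using ((hasDerivAt_pow 2 x).div_const 2).neg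
    simpa [mul_comm] using h3.exp
  have := h1.mul h2
  refine this.congr_deriv ?_
  rw [hermite_succ]
  simp only [map_sub, map_mul, aeval_X]
  ring

lemma expG_eq (x : ℝ) : Real.exp (-(x^2/2)) = Real.exp (-(1/2 : ℝ) * x^2) := by ring_nf

lemma integrable_herm_mul (a b : ℕ) :
    Integrable (fun x : ℝ => (aeval x (hermite a) : ℝ) * aeval x (hermite b) *
      Real.exp (-(x^2/2))) := by
  refine (integrable_aeval_mul_exp (hermite a * hermite b) one_half_pos).congr
    (Eventually.of_forall fun x => ?_)
  simp only [map_mul, expG_eq]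

lemma tendsto_herm_mul (a b : ℕ) :
    Tendsto (fun x : ℝ => (aeval x (hermite a) : ℝ) * aeval x (hermite b) *
      Real.exp (-(x^2/2))) (cocompact ℝ) (𝓝 0) := by
  refine (tendsto_aeval_mul_exp (hermite a * hermite b) one_half_pos).congr fun x => ?_
  simp only [map_mul, expG_eq]

lemma integrable_herm_one (a : ℕ) :
    Integrable (fun x : ℝ => (aeval x (hermite a) : ℝ) * Real.exp (-(x^2/2))) := by
  refine (integrable_aeval_mul_exp (hermite a) one_half_pos).congr
    (Eventually.of_forall fun x => ?_)
  simp only [expG_eq]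

lemma tendsto_herm_one (a : ℕ) :
    Tendsto (fun x : ℝ => (aeval x (hermite a) : ℝ) * Real.exp (-(x^2/2)))
      (cocompact ℝ) (𝓝 0) := by
  refine (tendsto_aeval_mul_exp (hermite a) one_half_pos).congr fun x => ?_
  simp only [expG_eq]

lemma herm_gauss_int (n : ℕ) :
    ∫ x : ℝ, (aeval x (hermite n) : ℝ) * Real.exp (-(x^2/2)) =
      if n = 0 then Real.sqrt (2*π) else 0 := by
  cases n with
  | zero =>
    rw [if_pos rfl]
    simp only [hermite_zero, map_one, one_mul]
    rw [show (fun x : ℝ => Real.exp (-(x^2/2))) = fun x : ℝ => Real.exp (-(1/2:ℝ)*x^2) from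
      funext expG_eq, integral_gaussian]
    rw [show π / (1/2 : ℝ) = 2 * π by ring]
  | succ k =>
    rw [if_neg (Nat.succ_ne_zero k)]
    have hbt := tendsto_herm_one k
    rw [cocompact_eq_atBot_atTop] at hbt
    refine integral_deriv_zero
      (fun x => -((aeval x (hermite k) : ℝ) * Real.exp (-(x^2/2)))) _
      (fun x => by simpa [Pi.neg_def] using (hasDerivAt_hermite_gauss k x).neg)
      (integrable_herm_one (k+1)) ?_ ?_
    · simpa using ((hbt.mono_left le_sup_right).neg)
    · simpa using ((hbt.mono_left le_sup_left).neg)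

lemma herm_step (k m : ℕ) :
    ∫ x : ℝ, (aeval x (hermite (k+1)) : ℝ) * aeval x (hermite (m+1)) * Real.exp (-(x^2/2)) =
      ((k : ℝ)+1) * ∫ x : ℝ, (aeval x (hermite k) : ℝ) * aeval x (hermite m) *
        Real.exp (-(x^2/2)) := by
  have hder : ∀ x : ℝ, HasDerivAt
      (fun y : ℝ => (aeval y (hermite (k+1)) : ℝ) * (aeval y (hermite m) *
        Real.exp (-(y^2/2))))
      (((k : ℝ)+1) * ((aeval x (hermite k) : ℝ) * aeval x (hermite m) * Real.exp (-(x^2/2)))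
        - (aeval x (hermite (k+1)) : ℝ) * aeval x (hermite (m+1)) * Real.exp (-(x^2/2))) x := by
    intro x
    have h1 : HasDerivAt (fun y : ℝ => (aeval y (hermite (k+1)) : ℝ))
        (aeval x (derivative (hermite (k+1)))) x := Polynomial.hasDerivAt_aeval _ x
    have h3 := h1.mul (hasDerivAt_hermite_gauss m x)
    refine h3.congr_deriv ?_
    rw [deriv_hermite k]
    simp only [map_mul, aeval_C]
    push_cast
    ring
  have hint1 := integrable_herm_mul k m
  have hint2 := integrable_herm_mul (k+1) (m+1)
  have hzero : ∫ x : ℝ,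
      (((k : ℝ)+1) * ((aeval x (hermite k) : ℝ) * aeval x (hermite m) * Real.exp (-(x^2/2)))
        - (aeval x (hermite (k+1)) : ℝ) * aeval x (hermite (m+1)) * Real.exp (-(x^2/2))) = 0 := by
    have hbt := tendsto_herm_mul (k+1) m
    rw [cocompact_eq_atBot_atTop] at hbt
    refine integral_deriv_zero _ _ hder ((hint1.const_mul _).sub hint2) ?_ ?_
    · exact (hbt.mono_left le_sup_right).congr fun x => by ring
    · exact (hbt.mono_left le_sup_left).congr fun x => by ring
  rw [integral_sub (hint1.const_mul _) hint2, MeasureTheory.integral_const_mul, sub_eq_zero] at hzero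
  exact hzero.symm

lemma herm_orth (n m : ℕ) :
    ∫ x : ℝ, (aeval x (hermite n) : ℝ) * aeval x (hermite m) * Real.exp (-(x^2/2)) =
      if n = m then Real.sqrt (2*π) * n.factorial else 0 := by
  induction m generalizing n with
  | zero =>
    simp only [hermite_zero, map_one, mul_one]
    rw [herm_gauss_int n]
    by_cases h : n = 0 <;> simp [h]
  | succ m ih =>
    cases n with
    | zero =>
      rw [if_neg (by omega)]
      simp only [hermite_zero, map_one, one_mul]
      simpa using herm_gauss_int (m+1)
    | succ k =>
      rw [herm_step k m, ih k]
      by_cases h : k = m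
      · subst h
        rw [if_pos rfl, if_pos rfl, Nat.factorial_succ]
        push_cast
        ring
      · rw [if_neg h, if_neg (by omega), mul_zero]


/-- Probabilists' Hermite polynomial evaluated at a real number. -/
noncomputable def H (n : ℕ) (x : ℝ) : ℝ := Polynomial.aeval x (Polynomial.hermite n)

theorem stmt_9 (ℓ α : ℝ) (hℓ : 0 < ℓ) (hα : 0 < α)
    (ε β δ2 : ℝ)
    (hε : ε = 1 / (Real.sqrt 2 * ℓ))
    (hβ : β = (1 + (2 * ε / α) ^ 2) ^ ((1 : ℝ) / 4))
    (hδ2 : δ2 = α ^ 2 * (β ^ 2 - 1) / 2)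
    (φ : ℕ → ℝ → ℝ)
    (hφ : ∀ n x, φ n x = Real.sqrt (β / (n.factorial : ℝ)) * Real.exp (-δ2 * x ^ 2) *
      H n (Real.sqrt 2 * α * β * x))
    (n m : ℕ) :
    ∫ x : ℝ, φ n x * φ m x * (α / Real.sqrt Real.pi * Real.exp (-(α ^ 2 * x ^ 2))) =
      if n = m then 1 else 0 := by
  have hβpos : 0 < β := by
    rw [hβ]
    exact Real.rpow_pos_of_pos (by positivity) _
  set c : ℝ := Real.sqrt 2 * α * β with hc
  have hcpos : 0 < c := by positivity
  set K : ℝ := Real.sqrt (β / n.factorial) * Real.sqrt (β / m.factorial) *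
    (α / Real.sqrt Real.pi) with hK
  set F : ℝ → ℝ := fun u => (aeval u (hermite n) : ℝ) * aeval u (hermite m) *
    Real.exp (-(u^2/2)) with hF
  have key : ∀ x : ℝ, φ n x * φ m x * (α / Real.sqrt Real.pi * Real.exp (-(α^2*x^2))) =
      K * F (c * x) := by
    intro x
    have h2 : Real.sqrt 2 ^ 2 = 2 := Real.sq_sqrt (by norm_num)
    have hexp : Real.exp (-δ2*x^2) * Real.exp (-δ2*x^2) * Real.exp (-(α^2*x^2)) =
        Real.exp (-((c*x)^2/2)) := by
      rw [← Real.exp_add, ← Real.exp_add]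
      congr 1
      rw [hδ2, hc, show (Real.sqrt 2 * α * β * x)^2 = Real.sqrt 2 ^ 2 * (α*β*x)^2 by ring, h2]
      ring
    rw [hφ, hφ, hF]
    simp only [H]
    rw [← hexp, hc]
    ring
  rw [show (fun x : ℝ => φ n x * φ m x * (α / Real.sqrt Real.pi * Real.exp (-(α^2*x^2)))) =
    fun x => K * F (c * x) from funext key]
  rw [MeasureTheory.integral_const_mul, MeasureTheory.Measure.integral_comp_mul_left F c, hF,
    herm_orth n m]
  by_cases h : n = m
  · subst h
    rw [if_pos rfl, if_pos rfl]
    rw [abs_of_pos (inv_pos.mpr hcpos), smul_eq_mul, hK, hc,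
      Real.mul_self_sqrt (div_nonneg hβpos.le (Nat.cast_nonneg _)),
      Real.sqrt_mul (by norm_num : (0:ℝ) ≤ 2) π]
    have hfac : (0:ℝ) < n.factorial := by positivity
    have hπ : (0:ℝ) < Real.sqrt π := Real.sqrt_pos.mpr Real.pi_pos
    have hs2 : (0:ℝ) < Real.sqrt 2 := by positivity
    field_simp
  · rw [if_neg h, if_neg h, smul_zero, mul_zero]
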